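/- Let t₁ and t₂ be two distinct nonzero real numbers. Then the Alexander quandles (ℝ, ∗_{t₁}) and (ℝ, ∗_{t₂}) are not isomorphic as topological quandles: there is no homeomorphism f : ℝ → ℝ such that f(t₁·x + (1−t₁)·y) = t₂·f(x) + (1−t₂)·f(y) for all x, y ∈ ℝ. -/

import Mathlib

/-- Theorem 3.7: for distinct nonzero reals `t₁ ≠ t₂`, the Alexander quandles
`(ℝ, ∗_{t₁})` and `(ℝ, ∗_{t₂})` are not isomorphic as topological quandles. -/
theorem alexander_quandles_R_not_isomorphic (t₁ t₂ : ℝ)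
    (ht₁ : t₁ ≠ 0) (ht₂ : t₂ ≠ 0) (hne : t₁ ≠ t₂) :
    ¬ ∃ f : ℝ ≃ₜ ℝ, ∀ x y : ℝ,
      f (t₁ * x + (1 - t₁) * y) = t₂ * f x + (1 - t₂) * f y := by
  rintro ⟨f, hf⟩
  by_cases h1 : t₁ = 1
  · -- t₁ = 1: equation forces f 0 = f 1
    have h2 : t₂ ≠ 1 := fun h => hne (h1.trans h.symm)
    have := hf 0 1
    rw [h1] at this
    simp only [sub_self, zero_mul, mul_zero, add_zero, mul_one, zero_add] at this
    have h3 : (1 - t₂) * (f 0 - f 1) = 0 := by linear_combination this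
    have hfe : f 0 = f 1 := by
      rcases mul_eq_zero.mp h3 with h | h
      · exact absurd (by linarith : t₂ = 1) h2
      · linarith
    exact absurd (f.injective hfe) (by norm_num)
  by_cases h2 : t₂ = 1
  · -- t₂ = 1: f ((1-t₁)) = f 0
    have h3 : f (1 - t₁) = f 0 := by
      have := hf 0 1
      rw [h2] at this
      simpa using this
    have : (1 : ℝ) - t₁ = 0 := f.injective h3
    exact h1 (by linarith)
  · -- main case
    set c := f 0 with hc
    set g : ℝ → ℝ := fun x => f x - c with hg
    have hgeq : ∀ x y : ℝ, g (t₁ * x + (1 - t₁) * y) = t₂ * g x + (1 - t₂) * g y := by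
      intro x y
      simp only [hg]
      rw [hf x y]; ring
    have hg0 : g 0 = 0 := by simp [hg, hc]
    have hgu : ∀ u : ℝ, g (t₁ * u) = t₂ * g u := by
      intro u
      have := hgeq u 0
      simpa [hg0] using this
    have hgv : ∀ v : ℝ, g ((1 - t₁) * v) = (1 - t₂) * g v := by
      intro v
      have := hgeq 0 v
      simpa [hg0] using this
    have hadd : ∀ u v : ℝ, g (u + v) = g u + g v := by
      intro u v
      have h1' : (1 : ℝ) - t₁ ≠ 0 := sub_ne_zero.mpr (Ne.symm h1)
      have := hgeq (u / t₁) (v / (1 - t₁))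
      rw [mul_div_cancel₀ _ ht₁, mul_div_cancel₀ _ h1'] at this
      rw [this, ← hgu (u / t₁), ← hgv (v / (1 - t₁)),
        mul_div_cancel₀ _ ht₁, mul_div_cancel₀ _ h1']
    have hcont : Continuous g := by
      simp only [hg]
      exact f.continuous.sub continuous_const
    let G : ℝ →+ ℝ := AddMonoidHom.mk' g hadd
    have hlin : ∀ x : ℝ, g x = x * g 1 := by
      intro x
      have := (G.toRealLinearMap hcont).map_smul x 1
      have e : ∀ y, (G.toRealLinearMap hcont) y = g y := fun y =>
        congrFun (AddMonoidHom.coe_toRealLinearMap G hcont) y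
      rw [e, e] at this
      simpa [G, smul_eq_mul, mul_comm] using this
    have hg1 : g 1 ≠ 0 := by
      intro h
      have : g 1 = g 0 := by rw [h, hg0]
      have : f 1 = f 0 := by
        simp only [hg] at this; linarith
      exact absurd (f.injective this) (by norm_num)
    have := hgu 1
    rw [mul_one, hlin t₁, hlin 1, one_mul] at this
    exact hne (mul_right_cancel₀ hg1 this)
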